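/- Let n ≥ 2 and let e be an n-inversion sequence with e_n = 0. Define g_n(e) by (g_n(e))_1 = 0 and (g_n(e))_k = e_{k−1} + 1 for 2 ≤ k ≤ n. Then g_n(e) is an n-inversion sequence and asc(g_n(e)) = asc((e_1,...,e_{n−1})) + 1 if n ≥ 2 (the shift creates exactly one new ascent at position 1, and preserves all ascents of (e_1,...,e_{n−1})). -/
import Mathlib


/-- `e` is an `n`-inversion sequence (0-indexed): `e i ≤ i` for `i < n`, zero beyond. -/
def IsInvSeq (n : ℕ) (e : ℕ → ℕ) : Prop :=
  (∀ i < n, e i ≤ i) ∧ ∀ i, n ≤ i → e i = 0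

/-- Number of ascents of a length-`n` sequence (0-indexed positions `0,...,n-2`). -/
def ascN (n : ℕ) (f : ℕ → ℕ) : ℕ :=
  ((Finset.range (n - 1)).filter (fun i => f i < f (i + 1))).card

/-- For an `n`-inversion sequence `e` with last entry `0`, the shifted sequence
`g` with `g 0 = 0` and `g k = e (k-1) + 1` for `1 ≤ k ≤ n-1` is again an
`n`-inversion sequence, and `asc g = asc (e_1, ..., e_{n-1}) + 1`. -/
theorem stmt12 (n : ℕ) (hn : 2 ≤ n) (e : ℕ → ℕ) (he : IsInvSeq n e)
    (h0 : e (n - 1) = 0) :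
    IsInvSeq n (fun k => if 1 ≤ k ∧ k < n then e (k - 1) + 1 else 0) ∧
    ascN n (fun k => if 1 ≤ k ∧ k < n then e (k - 1) + 1 else 0)
      = ascN (n - 1) e + 1 := by
  obtain ⟨he1, he2⟩ := he
  constructor
  · constructor
    · intro i hi
      by_cases h : 1 ≤ i ∧ i < n
      · simp only [if_pos h]
        have : e (i - 1) ≤ i - 1 := he1 (i - 1) (by omega)
        omega
      · simp [h]
    · intro i hi
      have : ¬ (1 ≤ i ∧ i < n) := by omega
      simp [this]
  · unfold ascN
    have hset : (Finset.range (n - 1)).filter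
        (fun i => (fun k => if 1 ≤ k ∧ k < n then e (k - 1) + 1 else 0) i <
          (fun k => if 1 ≤ k ∧ k < n then e (k - 1) + 1 else 0) (i + 1))
        = insert 0 (((Finset.range (n - 1 - 1)).filter
            (fun i => e i < e (i + 1))).image (· + 1)) := by
      ext i
      simp only [Finset.mem_filter, Finset.mem_range, Finset.mem_insert,
        Finset.mem_image]
      constructor
      · rintro ⟨hi, hlt⟩
        rcases Nat.eq_zero_or_pos i with h0 | hpos
        · exact Or.inl h0
        · right
          refine ⟨i - 1, ⟨by omega, ?_⟩, by omega⟩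
          have h1 : (1 ≤ i ∧ i < n) := by omega
          have h2 : (1 ≤ i + 1 ∧ i + 1 < n) := by omega
          simp only [if_pos h1, if_pos h2] at hlt
          have heq : i + 1 - 1 = i - 1 + 1 := by omega
          rw [heq] at hlt
          omega
      · rintro (rfl | ⟨j, ⟨hj, hlt⟩, rfl⟩)
        · have h1 : ¬ (1 ≤ 0 ∧ 0 < n) := by omega
          have h2 : (1 ≤ 0 + 1 ∧ 0 + 1 < n) := by omega
          simp only [if_neg h1, if_pos h2]
          omega
        · have h1 : (1 ≤ j + 1 ∧ j + 1 < n) := by omega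
          have h2 : (1 ≤ j + 1 + 1 ∧ j + 1 + 1 < n) := by omega
          simp only [if_pos h1, if_pos h2]
          constructor
          · omega
          · simpa using hlt
    rw [hset, Finset.card_insert_of_notMem, Finset.card_image_of_injective _
      (fun a b h => by omega)]
    simp
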